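/- Let x, y ∈ ℂⁿ \ {0} with Re(x*y) > 0. Then the matrix H = y x⁺ − (y x⁺)* P_x, where x⁺ = x*/‖x‖² and P_x = I − x x⁺, satisfies Hx = y, H + H* ⪰ 0, and ‖H‖_F² = 2‖y‖²/‖x‖² − |x*y|²/‖x‖⁴. -/

import Mathlib

open Matrix
open scoped ComplexOrder

noncomputable def frobSq {n m : Type*} [Fintype n] [Fintype m] (A : Matrix n m ℂ) : ℝ :=
  ∑ i, ∑ j, ‖A i j‖ ^ 2

open ComplexConjugate in
private lemma quad_sum {n : ℕ} (a b c d : ℂ) (f g : Fin n → ℂ) :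
    ∑ j, (a * conj (f j) + b * conj (g j)) * (c * f j + d * g j)
      = a * c * (∑ j, conj (f j) * f j) + a * d * (∑ j, conj (f j) * g j)
      + b * c * (∑ j, conj (g j) * f j) + b * d * (∑ j, conj (g j) * g j) := by
  simp only [Finset.mul_sum, ← Finset.sum_add_distrib]
  exact Finset.sum_congr rfl fun j _ => by ring

set_option maxHeartbeats 2000000 in
theorem dissipative_mapping_min_norm {n : ℕ} (x y : Fin n → ℂ) (hx : x ≠ 0) (hy : y ≠ 0)
    (hre : 0 < (star x ⬝ᵥ y).re) :
    ((((star x ⬝ᵥ x)⁻¹ • Matrix.vecMulVec y (star x))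
        - ((star x ⬝ᵥ x)⁻¹ • Matrix.vecMulVec y (star x))ᴴ *
            (1 - (star x ⬝ᵥ x)⁻¹ • Matrix.vecMulVec x (star x))).mulVec x = y) ∧
    (((((star x ⬝ᵥ x)⁻¹ • Matrix.vecMulVec y (star x))
        - ((star x ⬝ᵥ x)⁻¹ • Matrix.vecMulVec y (star x))ᴴ *
            (1 - (star x ⬝ᵥ x)⁻¹ • Matrix.vecMulVec x (star x)))
      + (((star x ⬝ᵥ x)⁻¹ • Matrix.vecMulVec y (star x))
        - ((star x ⬝ᵥ x)⁻¹ • Matrix.vecMulVec y (star x))ᴴ *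
            (1 - (star x ⬝ᵥ x)⁻¹ • Matrix.vecMulVec x (star x)))ᴴ).PosSemidef) ∧
    frobSq (((star x ⬝ᵥ x)⁻¹ • Matrix.vecMulVec y (star x))
        - ((star x ⬝ᵥ x)⁻¹ • Matrix.vecMulVec y (star x))ᴴ *
            (1 - (star x ⬝ᵥ x)⁻¹ • Matrix.vecMulVec x (star x)))
      = 2 * (∑ i, ‖y i‖ ^ 2) / (∑ i, ‖x i‖ ^ 2)
        - ‖star x ⬝ᵥ y‖ ^ 2 / (∑ i, ‖x i‖ ^ 2) ^ 2 := by
  classical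
  set M := (((star x ⬝ᵥ x)⁻¹ • Matrix.vecMulVec y (star x))
      - ((star x ⬝ᵥ x)⁻¹ • Matrix.vecMulVec y (star x))ᴴ *
          (1 - (star x ⬝ᵥ x)⁻¹ • Matrix.vecMulVec x (star x))) with hMdef
  set A : ℝ := ∑ i, ‖x i‖ ^ 2 with hAdef
  set B : ℝ := ∑ i, ‖y i‖ ^ 2 with hBdef
  set s : ℂ := star x ⬝ᵥ y with hsdef
  have hxx : ∑ j, (starRingEnd ℂ) (x j) * x j = (A : ℝ) := by
    rw [hAdef]; push_cast
    exact Finset.sum_congr rfl fun j _ => by rw [mul_comm, Complex.mul_conj']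
  have hyy : ∑ j, (starRingEnd ℂ) (y j) * y j = (B : ℝ) := by
    rw [hBdef]; push_cast
    exact Finset.sum_congr rfl fun j _ => by rw [mul_comm, Complex.mul_conj']
  have hxy : ∑ j, (starRingEnd ℂ) (x j) * y j = s := by
    rw [hsdef]; simp [dotProduct]
  have hyx : ∑ j, (starRingEnd ℂ) (y j) * x j = (starRingEnd ℂ) s := by
    rw [← hxy, map_sum]
    exact Finset.sum_congr rfl fun j _ => by simp [mul_comm]
  have hax : star x ⬝ᵥ x = (A : ℂ) := by
    rw [← hxx]; simp [dotProduct]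
  have hA0 : 0 < A := by
    obtain ⟨i, hi⟩ := Function.ne_iff.mp hx
    have : 0 < ‖x i‖ := norm_pos_iff.mpr hi
    exact Finset.sum_pos' (fun j _ => by positivity)
      ⟨i, Finset.mem_univ i, by positivity⟩
  have hAne : (A : ℂ) ≠ 0 := Complex.ofReal_ne_zero.mpr hA0.ne'
  set u : Fin n → ℂ := fun i => (A : ℂ)⁻¹ * y i + ((A : ℂ)⁻¹ ^ 2 * (starRingEnd ℂ) s) * x i
    with hudef
  set v : Fin n → ℂ := fun i => -(A : ℂ)⁻¹ * x i with hvdef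
  have hH : ∀ i j, M i j = u i * (starRingEnd ℂ) (x j) + v i * (starRingEnd ℂ) (y j) := by
    intro i j
    rw [hMdef]
    simp only [hax, Matrix.sub_apply, Matrix.smul_apply, Matrix.vecMulVec_apply,
      Matrix.mul_apply, Matrix.one_apply, Matrix.conjTranspose_apply,
      smul_eq_mul, Pi.star_apply, mul_sub, Finset.sum_sub_distrib,
      star_mul', star_star, mul_ite, mul_one, mul_zero]
    simp only [← starRingEnd_apply]
    have hfac : ∑ k, (starRingEnd ℂ) ((A:ℂ)⁻¹) * ((starRingEnd ℂ) (y k) * x i) * ((A:ℂ)⁻¹ * (x k * (starRingEnd ℂ) (x j)))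
        = ((starRingEnd ℂ) ((A:ℂ)⁻¹) * x i * ((A:ℂ)⁻¹ * (starRingEnd ℂ) (x j))) * (starRingEnd ℂ) s := by
      rw [← hyx, Finset.mul_sum]
      exact Finset.sum_congr rfl fun k _ => by ring
    rw [hfac]
    simp only [hudef, hvdef, map_inv₀, Complex.conj_ofReal]
    ring
  have part1 : M.mulVec x = y := by
    funext i
    have h1 : M.mulVec x i
        = ∑ j, (u i * (starRingEnd ℂ) (x j) + v i * (starRingEnd ℂ) (y j)) * (1 * x j + 0 * y j) := by
      simp only [Matrix.mulVec, dotProduct]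
      exact Finset.sum_congr rfl fun j _ => by rw [hH]; ring
    rw [h1, quad_sum, hxx, hyx]
    simp only [hudef, hvdef]
    field_simp
    ring
  refine ⟨part1, ?_, ?_⟩
  · -- PosSemidef
    set r : ℝ := 2 * s.re / A ^ 2 with hrdef
    have hr0 : 0 ≤ r := by
      have := sq_nonneg A
      positivity
    have hent : ∀ i j, (M + Mᴴ) i j = (r : ℂ) * (x i * (starRingEnd ℂ) (x j)) := by
      intro i j
      simp only [Matrix.add_apply, Matrix.conjTranspose_apply, hH, Complex.star_def]
      simp only [hudef, hvdef, _root_.map_add, _root_.map_mul, _root_.map_neg, map_inv₀, _root_.map_pow,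
        Complex.conj_conj, Complex.conj_ofReal]
      rw [show ((r : ℝ) : ℂ) = (s + (starRingEnd ℂ) s) / (A : ℂ) ^ 2 by
        rw [hrdef]; push_cast; rw [Complex.add_conj]; push_cast; ring]
      field_simp
      ring
    constructor
    · -- Hermitian
      exact Matrix.isHermitian_add_transpose_self M
    · intro w
      have hquad : star w ⬝ᵥ (M + Mᴴ).mulVec w
          = ((r * Complex.normSq (∑ j, (starRingEnd ℂ) (x j) * w j) : ℝ) : ℂ) := by
        calc star w ⬝ᵥ (M + Mᴴ).mulVec w
            = ∑ i, (starRingEnd ℂ) (w i) * ∑ j, (M + Mᴴ) i j * w j := by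
              simp [dotProduct, Matrix.mulVec, Complex.star_def]
          _ = ∑ i, ((r : ℂ) * ((starRingEnd ℂ) (w i) * x i))
                * ∑ j, ((starRingEnd ℂ) (x j) * w j) := by
              refine Finset.sum_congr rfl fun i _ => ?_
              simp only [hent]
              rw [Finset.mul_sum, Finset.mul_sum]
              exact Finset.sum_congr rfl fun j _ => by ring
          _ = ((r : ℂ) * ∑ i, (starRingEnd ℂ) (w i) * x i)
                * ∑ j, ((starRingEnd ℂ) (x j) * w j) := by
              rw [← Finset.sum_mul, ← Finset.mul_sum]
          _ = (r : ℂ) * ((starRingEnd ℂ) (∑ j, (starRingEnd ℂ) (x j) * w j)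
                * (∑ j, (starRingEnd ℂ) (x j) * w j)) := by
              rw [map_sum]
              rw [show ∑ j, (starRingEnd ℂ) ((starRingEnd ℂ) (x j) * w j)
                  = ∑ i, (starRingEnd ℂ) (w i) * x i from
                Finset.sum_congr rfl fun j _ => by simp [mul_comm]]
              ring
          _ = _ := by
              rw [mul_comm ((starRingEnd ℂ) _), Complex.mul_conj]
              push_cast
              ring
      have hconv : (w.sum fun i xi => w.sum fun j xj => star xi * (M + Mᴴ) i j * xj)
          = star ⇑w ⬝ᵥ (M + Mᴴ) *ᵥ ⇑w := by
        simp [Finsupp.sum_fintype, dotProduct, Matrix.mulVec, Finset.mul_sum, mul_assoc]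
      rw [hconv, hquad]
      exact Complex.zero_le_real.mpr (mul_nonneg hr0 (Complex.normSq_nonneg _))
  · -- Frobenius norm
    have hn : ∀ z : ℂ, ‖z‖ ^ 2 = (z * (starRingEnd ℂ) z).re := fun z => by
      rw [Complex.mul_conj', ← Complex.ofReal_pow, Complex.ofReal_re]
    have hfr : frobSq M = (∑ i, ∑ j, M i j * (starRingEnd ℂ) (M i j)).re := by
      unfold frobSq
      rw [Complex.re_sum]
      exact Finset.sum_congr rfl fun i _ => by
        rw [Complex.re_sum]; exact Finset.sum_congr rfl fun j _ => hn _
    clear_value u v M s B A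
    set c1 : ℂ := (A : ℂ)⁻¹ with hc1
    set c2 : ℂ := (A : ℂ)⁻¹ ^ 2 * (starRingEnd ℂ) s with hc2
    set c3 : ℂ := -(A : ℂ)⁻¹ with hc3
    clear_value c1 c2 c3
    have key : ∑ i, ∑ j, M i j * (starRingEnd ℂ) (M i j)
        = (∑ i, u i * (starRingEnd ℂ) (u i)) * (A : ℂ)
          + (∑ i, u i * (starRingEnd ℂ) (v i)) * s
          + (∑ i, v i * (starRingEnd ℂ) (u i)) * (starRingEnd ℂ) s
          + (∑ i, v i * (starRingEnd ℂ) (v i)) * (B : ℂ) := by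
      calc ∑ i, ∑ j, M i j * (starRingEnd ℂ) (M i j)
          = ∑ i, (u i * (starRingEnd ℂ) (u i) * (A : ℂ)
              + u i * (starRingEnd ℂ) (v i) * s
              + v i * (starRingEnd ℂ) (u i) * (starRingEnd ℂ) s
              + v i * (starRingEnd ℂ) (v i) * (B : ℂ)) := by
            refine Finset.sum_congr rfl fun i _ => ?_
            rw [Finset.sum_congr rfl fun j _ => show M i j * (starRingEnd ℂ) (M i j)
                = (u i * (starRingEnd ℂ) (x j) + v i * (starRingEnd ℂ) (y j))
                  * ((starRingEnd ℂ) (u i) * x j + (starRingEnd ℂ) (v i) * y j) from by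
              rw [hH]; simp only [_root_.map_add, _root_.map_mul, Complex.conj_conj]]
            rw [quad_sum, hxx, hxy, hyx, hyy]
        _ = _ := by
            simp only [Finset.sum_add_distrib, ← Finset.sum_mul]
    have huu : ∑ i, u i * (starRingEnd ℂ) (u i)
        = (starRingEnd ℂ) c1 * c1 * (B : ℂ) + (starRingEnd ℂ) c1 * c2 * (starRingEnd ℂ) s
          + (starRingEnd ℂ) c2 * c1 * s + (starRingEnd ℂ) c2 * c2 * (A : ℂ) := by
      rw [Finset.sum_congr rfl fun i _ => show u i * (starRingEnd ℂ) (u i)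
          = ((starRingEnd ℂ) c1 * (starRingEnd ℂ) (y i) + (starRingEnd ℂ) c2 * (starRingEnd ℂ) (x i))
            * (c1 * y i + c2 * x i) from by
        simp only [hudef, _root_.map_add, _root_.map_mul]; ring]
      rw [quad_sum, hyy, hyx, hxy, hxx]
    have huv : ∑ i, u i * (starRingEnd ℂ) (v i)
        = (starRingEnd ℂ) c3 * c2 * (A : ℂ) + (starRingEnd ℂ) c3 * c1 * s := by
      rw [Finset.sum_congr rfl fun i _ => show u i * (starRingEnd ℂ) (v i)
          = ((starRingEnd ℂ) c3 * (starRingEnd ℂ) (x i) + 0 * (starRingEnd ℂ) (y i))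
            * (c2 * x i + c1 * y i) from by
        simp only [hudef, hvdef, _root_.map_neg, _root_.map_mul]; ring]
      rw [quad_sum, hxx, hxy]
      ring
    have hvu : ∑ i, v i * (starRingEnd ℂ) (u i)
        = (starRingEnd ℂ) c1 * c3 * (starRingEnd ℂ) s + (starRingEnd ℂ) c2 * c3 * (A : ℂ) := by
      rw [Finset.sum_congr rfl fun i _ => show v i * (starRingEnd ℂ) (u i)
          = ((starRingEnd ℂ) c1 * (starRingEnd ℂ) (y i) + (starRingEnd ℂ) c2 * (starRingEnd ℂ) (x i))
            * (0 * y i + c3 * x i) from by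
        simp only [hudef, hvdef, _root_.map_add, _root_.map_mul]; ring]
      rw [quad_sum, hyx, hxx]
      ring
    have hvv : ∑ i, v i * (starRingEnd ℂ) (v i)
        = (starRingEnd ℂ) c3 * c3 * (A : ℂ) := by
      rw [Finset.sum_congr rfl fun i _ => show v i * (starRingEnd ℂ) (v i)
          = ((starRingEnd ℂ) c3 * (starRingEnd ℂ) (x i) + 0 * (starRingEnd ℂ) (y i))
            * (c3 * x i + 0 * y i) from by
        simp only [hvdef, _root_.map_neg, _root_.map_mul]; ring]
      rw [quad_sum, hxx]
      ring
    have hsc : s * (starRingEnd ℂ) s = ((‖s‖ ^ 2 : ℝ) : ℂ) := by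
      rw [Complex.mul_conj']; push_cast; ring
    have hfin : ((starRingEnd ℂ) c1 * c1 * (B : ℂ) + (starRingEnd ℂ) c1 * c2 * (starRingEnd ℂ) s
          + (starRingEnd ℂ) c2 * c1 * s + (starRingEnd ℂ) c2 * c2 * (A : ℂ)) * (A : ℂ)
        + ((starRingEnd ℂ) c3 * c2 * (A : ℂ) + (starRingEnd ℂ) c3 * c1 * s) * s
        + ((starRingEnd ℂ) c1 * c3 * (starRingEnd ℂ) s + (starRingEnd ℂ) c2 * c3 * (A : ℂ)) * (starRingEnd ℂ) s
        + ((starRingEnd ℂ) c3 * c3 * (A : ℂ)) * (B : ℂ)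
        = ((2 * B / A - ‖s‖ ^ 2 / A ^ 2 : ℝ) : ℂ) := by
      rw [show ((2 * B / A - ‖s‖ ^ 2 / A ^ 2 : ℝ) : ℂ)
          = 2 * (B : ℂ) / (A : ℂ) - (s * (starRingEnd ℂ) s) / (A : ℂ) ^ 2 by
        rw [hsc]; push_cast; ring]
      simp only [hc1, hc2, hc3, _root_.map_neg, _root_.map_mul, _root_.map_pow, map_inv₀,
        Complex.conj_ofReal, Complex.conj_conj]
      field_simp
      ring
    rw [hfr, key, huu, huv, hvu, hvv, hfin, Complex.ofReal_re]
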